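/- arXiv:1601.00262 — 2 statements merged into one kernel-verified Lean document; each statement's English description precedes it below -/
import Mathlib

section
/- Let σ ≥ 2 and n ≥ 1 be natural numbers, let ρ, r be natural numbers and m : Fin r → ℕ with m i ≥ 2 for every i, and set E := 2ρ − 2 + ∑_{i : Fin r} (1 − 1/(m i)) as a rational number. If E > 0 and (2σ − 2 : ℚ) = n · E, then n ≤ 84·(σ − 1) (the Hurwitz bound). -/
private lemma inv_le_inv_nat (k a : ℕ) (hk : 0 < k) (h : k ≤ a) :
    (1:ℚ)/a ≤ 1/k := by
  apply one_div_le_one_div_of_le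
  · exact_mod_cast hk
  · exact_mod_cast h

private lemma nat_lt_of_one_div_lt (k c : ℕ) (hc : 0 < c)
    (h : (1:ℚ)/c < 1/k) : k < c := by
  by_contra hkc
  push_neg at hkc
  have := inv_le_inv_nat c k hc hkc
  linarith

private lemma triple_sorted (a b c : ℕ) (ha : 2 ≤ a) (hab : a ≤ b) (hbc : b ≤ c)
    (h : 1/(a:ℚ) + 1/b + 1/c < 1) : 1/(a:ℚ) + 1/b + 1/c ≤ 41/42 := by
  have hb : 2 ≤ b := le_trans ha hab
  have hc : 2 ≤ c := le_trans hb hbc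
  have hc0 : 0 < c := by omega
  rcases Nat.lt_or_ge a 3 with ha2 | ha3
  · -- a = 2
    have hae : a = 2 := by omega
    subst hae
    rcases Nat.lt_or_ge b 4 with hb3 | hb4
    · rcases Nat.lt_or_ge b 3 with hb2 | hb3'
      · -- b = 2 impossible
        have hbe : b = 2 := by omega
        subst hbe
        have : (0:ℚ) < 1/c := by positivity
        norm_num at h
        linarith
      · -- b = 3, so 1/c < 1/6, c ≥ 7
        have hbe : b = 3 := by omega
        subst hbe
        have h6 : (1:ℚ)/c < 1/6 := by norm_num at h ⊢; linarith
        have hc7 : 7 ≤ c := nat_lt_of_one_div_lt 6 c hc0 h6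
        have := inv_le_inv_nat 7 c (by norm_num) hc7
        norm_num at this ⊢
        linarith
    · rcases Nat.lt_or_ge b 5 with hb4' | hb5
      · -- b = 4, so 1/c < 1/4, c ≥ 5
        have hbe : b = 4 := by omega
        subst hbe
        have h4 : (1:ℚ)/c < 1/4 := by norm_num at h ⊢; linarith
        have hc5 : 5 ≤ c := nat_lt_of_one_div_lt 4 c hc0 h4
        have := inv_le_inv_nat 5 c (by norm_num) hc5
        norm_num at this ⊢
        linarith
      · -- b ≥ 5
        have h1 := inv_le_inv_nat 5 b (by norm_num) hb5
        have h2 := inv_le_inv_nat 5 c (by norm_num) (le_trans hb5 hbc)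
        norm_num at h1 h2 ⊢
        linarith
  · rcases Nat.lt_or_ge a 4 with ha3' | ha4
    · -- a = 3
      have hae : a = 3 := by omega
      subst hae
      rcases Nat.lt_or_ge b 4 with hb3 | hb4
      · -- b = 3, so 1/c < 1/3, c ≥ 4
        have hbe : b = 3 := by omega
        subst hbe
        have h3 : (1:ℚ)/c < 1/3 := by norm_num at h ⊢; linarith
        have hc4 : 4 ≤ c := nat_lt_of_one_div_lt 3 c hc0 h3
        have := inv_le_inv_nat 4 c (by norm_num) hc4
        norm_num at this ⊢
        linarith
      · have h2 := inv_le_inv_nat 4 b (by norm_num) hb4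
        have h3 := inv_le_inv_nat 4 c (by norm_num) (le_trans hb4 hbc)
        norm_num at h2 h3 ⊢
        linarith
    · -- a ≥ 4
      have h1 := inv_le_inv_nat 4 a (by norm_num) ha4
      have h2 := inv_le_inv_nat 4 b (by norm_num) (le_trans ha4 hab)
      have h3 := inv_le_inv_nat 4 c (by norm_num) (le_trans (le_trans ha4 hab) hbc)
      norm_num at h1 h2 h3 ⊢
      linarith

private lemma triple (a b c : ℕ) (ha : 2 ≤ a) (hb : 2 ≤ b) (hc : 2 ≤ c)
    (h : 1/(a:ℚ) + 1/b + 1/c < 1) : 1/(a:ℚ) + 1/b + 1/c ≤ 41/42 := by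
  rcases le_total a b with h1 | h1 <;> rcases le_total b c with h2 | h2 <;>
    rcases le_total a c with h3 | h3
  all_goals
    first
    | (have := triple_sorted a b c (by omega) (by omega) (by omega) (by linarith); linarith)
    | (have := triple_sorted a c b (by omega) (by omega) (by omega) (by linarith); linarith)
    | (have := triple_sorted b a c (by omega) (by omega) (by omega) (by linarith); linarith)
    | (have := triple_sorted b c a (by omega) (by omega) (by omega) (by linarith); linarith)
    | (have := triple_sorted c a b (by omega) (by omega) (by omega) (by linarith); linarith)
    | (have := triple_sorted c b a (by omega) (by omega) (by omega) (by linarith); linarith)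

theorem hurwitz_bound
    (σ n : ℕ) (hσ : 2 ≤ σ) (hn : 1 ≤ n)
    (ρ r : ℕ) (m : Fin r → ℕ) (hm : ∀ i, 2 ≤ m i)
    (E : ℚ) (hE : E = 2 * (ρ : ℚ) - 2 + ∑ i : Fin r, (1 - 1 / (m i : ℚ)))
    (hpos : 0 < E) (heq : (2 * (σ : ℚ) - 2) = (n : ℚ) * E) :
    n ≤ 84 * (σ - 1) := by
  -- bounds on each summand
  have hterm_lo : ∀ i : Fin r, (1:ℚ)/2 ≤ 1 - 1 / (m i : ℚ) := by
    intro i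
    have := inv_le_inv_nat 2 (m i) (by norm_num) (hm i)
    norm_num at this ⊢
    linarith
  have hterm_hi : ∀ i : Fin r, 1 - 1 / (m i : ℚ) < 1 := by
    intro i
    have h0 : (0:ℚ) < m i := by exact_mod_cast Nat.lt_of_lt_of_le (by norm_num) (hm i)
    have : (0:ℚ) < 1 / (m i) := by positivity
    linarith
  have key : 1/42 ≤ E := by
    rcases Nat.lt_or_ge ρ 2 with hρ2 | hρ2
    swap
    · -- ρ ≥ 2
      have hsum : (0:ℚ) ≤ ∑ i : Fin r, (1 - 1 / (m i : ℚ)) :=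
        Finset.sum_nonneg fun i _ => le_trans (by norm_num) (hterm_lo i)
      have : (2:ℚ) ≤ ρ := by exact_mod_cast hρ2
      rw [hE]; linarith
    rcases Nat.lt_or_ge ρ 1 with hρ0 | hρ1
    · -- ρ = 0
      have hρe : ρ = 0 := by omega
      subst hρe
      -- need r ≥ 3
      have hsum_hi : ∑ i : Fin r, (1 - 1 / (m i : ℚ)) ≤ r := by
        calc ∑ i : Fin r, (1 - 1 / (m i : ℚ)) ≤ ∑ _i : Fin r, (1:ℚ) :=
              Finset.sum_le_sum fun i _ => le_of_lt (hterm_hi i)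
          _ = r := by simp
      have hr3 : 3 ≤ r := by
        by_contra hr
        push_neg at hr
        have : (r:ℚ) ≤ 2 := by exact_mod_cast Nat.lt_succ_iff.mp hr
        rw [hE] at hpos
        push_cast at hpos
        linarith
      rcases Nat.lt_or_ge r 5 with hr5 | hr5
      swap
      · -- r ≥ 5
        have hsum_lo : (r:ℚ) * (1/2) ≤ ∑ i : Fin r, (1 - 1 / (m i : ℚ)) := by
          calc (r:ℚ) * (1/2) = ∑ _i : Fin r, (1:ℚ)/2 := by simp
            _ ≤ _ := Finset.sum_le_sum fun i _ => hterm_lo i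
        have : (5:ℚ) ≤ r := by exact_mod_cast hr5
        rw [hE]; push_cast; nlinarith
      rcases Nat.lt_or_ge r 4 with hr4 | hr4
      · -- r = 3
        have hre : r = 3 := by omega
        subst hre
        rw [hE] at hpos ⊢
        rw [Fin.sum_univ_three] at hpos ⊢
        have h1 : 1/((m 0 : ℚ)) + 1/(m 1) + 1/(m 2) < 1 := by push_cast at hpos ⊢; linarith
        have := triple (m 0) (m 1) (m 2) (hm 0) (hm 1) (hm 2) h1
        push_cast; linarith
      · -- r = 4
        have hre : r = 4 := by omega
        subst hre
        have hex : ∃ i : Fin 4, 3 ≤ m i := by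
          by_contra hall
          push_neg at hall
          have heq2 : ∀ i : Fin 4, m i = 2 := fun i => by have := hm i; have := hall i; omega
          rw [hE, Fin.sum_univ_four] at hpos
          rw [heq2 0, heq2 1, heq2 2, heq2 3] at hpos
          norm_num at hpos
        obtain ⟨i, hi⟩ := hex
        have hi' : 1 - 1/((m i : ℚ)) ≥ 2/3 := by
          have := inv_le_inv_nat 3 (m i) (by norm_num) hi
          norm_num at this ⊢; linarith
        rw [hE, Fin.sum_univ_four]
        have h0 := hterm_lo 0
        have h1 := hterm_lo 1
        have h2 := hterm_lo 2
        have h3 := hterm_lo 3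
        fin_cases i <;> simp only [one_div] at hi' h0 h1 h2 h3 ⊢ <;> simp at hi' <;> push_cast <;> linarith
    · -- ρ = 1
      have hρe : ρ = 1 := by omega
      subst hρe
      have hr1 : 1 ≤ r := by
        by_contra hr
        push_neg at hr
        have hre : r = 0 := by omega
        subst hre
        rw [hE] at hpos
        simp at hpos
      have hsum_lo : (r:ℚ) * (1/2) ≤ ∑ i : Fin r, (1 - 1 / (m i : ℚ)) := by
        calc (r:ℚ) * (1/2) = ∑ _i : Fin r, (1:ℚ)/2 := by simp
          _ ≤ _ := Finset.sum_le_sum fun i _ => hterm_lo i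
      have : (1:ℚ) ≤ r := by exact_mod_cast hr1
      rw [hE]; push_cast; nlinarith
  -- conclude
  have hnq : (n:ℚ) ≤ 84 * ((σ:ℚ) - 1) := by
    have h1 : (n:ℚ) * (1/42) ≤ (n:ℚ) * E := by
      apply mul_le_mul_of_nonneg_left key (by positivity)
    linarith
  have hcast : ((84 * (σ - 1) : ℕ) : ℚ) = 84 * ((σ:ℚ) - 1) := by
    push_cast [Nat.cast_sub (by omega : 1 ≤ σ)]
    try ring
  have : (n:ℚ) ≤ ((84 * (σ - 1) : ℕ) : ℚ) := by rw [hcast]; exact hnq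
  exact_mod_cast this
end

section
/- Let σ ≥ 2 and n ≥ 1 be natural numbers, let ρ, r be natural numbers and m : Fin r → ℕ with m i ≥ 2 for every i, and set E := 2ρ − 2 + ∑_{i : Fin r} (1 − 1/(m i)) as a rational number. If E > 0, E ≠ 1/42, and (2σ − 2 : ℚ) = n · E, then n ≤ 48·(σ − 1). -/
private lemma inv_le_aux (k c : ℕ) (hk : 1 ≤ k) (h : k ≤ c) : 1/(c:ℚ) ≤ 1/(k:ℚ) := by
  apply one_div_le_one_div_of_le
  · exact_mod_cast hk
  · exact_mod_cast h

private lemma inv_pos_aux (c : ℕ) (hc : 1 ≤ c) : 0 < 1/(c:ℚ) := by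
  have : (0:ℚ) < c := by exact_mod_cast hc
  positivity

private lemma key3 (a b c : ℕ) (ha : 2 ≤ a) (hab : a ≤ b) (hbc : b ≤ c)
    (hpos : 0 < 1 - 1/(a:ℚ) - 1/b - 1/c)
    (hne : (1:ℚ) - 1/a - 1/b - 1/c ≠ 1/42) :
    1/24 ≤ 1 - 1/(a:ℚ) - 1/b - 1/c := by
  rcases eq_or_lt_of_le ha with ha2 | ha3
  · -- a = 2
    subst ha2
    norm_num
    by_cases hb5 : 5 ≤ b
    · have h1 := inv_le_aux 5 b (by norm_num) hb5
      have h2 := inv_le_aux 5 c (by norm_num) (le_trans hb5 hbc)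
      norm_num at h1 h2 ⊢
      linarith
    · interval_cases b
      · -- b = 2
        have := inv_pos_aux c (by omega)
        norm_num at hpos
        linarith
      · -- b = 3
        have hc7 : 7 ≤ c := by
          by_contra h
          push_neg at h
          have := inv_le_aux c 6 (by omega) (by omega)
          norm_num at hpos this
          linarith
        rcases eq_or_lt_of_le hc7 with hc | hc
        · exfalso; apply hne; rw [← hc]; norm_num
        · have := inv_le_aux 8 c (by norm_num) (by omega)
          norm_num at this ⊢
          linarith
      · -- b = 4
        have hc5 : 5 ≤ c := by
          by_contra h
          push_neg at h
          have := inv_le_aux c 4 (by omega) (by omega)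
          norm_num at hpos this
          linarith
        have := inv_le_aux 5 c (by norm_num) hc5
        norm_num at this ⊢
        linarith
  · -- 3 ≤ a
    have ha' : 3 ≤ a := ha3
    have h1 := inv_le_aux 3 a (by norm_num) ha'
    by_cases hb4 : 4 ≤ b
    · have h2 := inv_le_aux 4 b (by norm_num) hb4
      have h3 := inv_le_aux 4 c (by norm_num) (le_trans hb4 hbc)
      push_cast at h1 h2 h3
      linarith
    · have hb3 : b = 3 := by omega
      have ha3' : a = 3 := by omega
      subst hb3; subst ha3'
      by_cases hc4 : 4 ≤ c
      · have h3 := inv_le_aux 4 c (by norm_num) hc4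
        norm_num at h3 ⊢
        linarith
      · have : c = 3 := by omega
        subst this
        norm_num at hpos

private lemma key3' (a b c : ℕ) (ha : 2 ≤ a) (hb : 2 ≤ b) (hc : 2 ≤ c)
    (hpos : 0 < 1 - 1/(a:ℚ) - 1/b - 1/c)
    (hne : (1:ℚ) - 1/a - 1/b - 1/c ≠ 1/42) :
    1/24 ≤ 1 - 1/(a:ℚ) - 1/b - 1/c := by
  rcases le_total a b with h1 | h1 <;> rcases le_total b c with h2 | h2 <;>
    rcases le_total a c with h3 | h3
  · exact key3 a b c ha h1 h2 hpos hne
  · exact key3 a b c ha h1 h2 hpos hne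
  · have := key3 a c b ha h3 h2 (by linarith) (by intro h; exact hne (by linarith))
    linarith
  · have := key3 c a b hc h3 h1 (by linarith) (by intro h; exact hne (by linarith))
    linarith
  · have := key3 b a c hb h1 h3 (by linarith) (by intro h; exact hne (by linarith))
    linarith
  · have := key3 b c a hb h2 h3 (by linarith) (by intro h; exact hne (by linarith))
    linarith
  · have := key3 c b a hc h2 h1 (by linarith) (by intro h; exact hne (by linarith))
    linarith
  · have := key3 c b a hc h2 h1 (by linarith) (by intro h; exact hne (by linarith))
    linarith

private lemma E_lb (ρ r : ℕ) (m : Fin r → ℕ) (hm : ∀ i, 2 ≤ m i)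
    (E : ℚ) (hE : E = 2 * (ρ : ℚ) - 2 + ∑ i : Fin r, (1 - 1 / (m i : ℚ)))
    (hpos : 0 < E) (hne : E ≠ 1 / 42) : 1/24 ≤ E := by
  have hterm : ∀ i : Fin r, (1:ℚ)/2 ≤ 1 - 1/(m i : ℚ) := by
    intro i
    have := inv_le_aux 2 (m i) (by norm_num) (hm i)
    norm_num at this ⊢
    linarith
  have hsum_lb : (r:ℚ) * (1/2) ≤ ∑ i : Fin r, (1 - 1/(m i : ℚ)) := by
    have := Finset.card_nsmul_le_sum Finset.univ (fun i => 1 - 1/(m i : ℚ)) (1/2)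
      (fun i _ => hterm i)
    simpa [nsmul_eq_mul] using this
  match ρ with
  | (ρ+2) =>
    have h0 : (0:ℚ) ≤ (r:ℚ) * (1/2) := by positivity
    rw [hE]
    push_cast
    linarith
  | 1 =>
    rcases Nat.eq_zero_or_pos r with hr | hr
    · subst hr
      simp at hE
      rw [hE] at hpos
      norm_num at hpos
    · have : (1:ℚ) ≤ (r:ℚ) := by exact_mod_cast hr
      rw [hE]
      push_cast
      nlinarith
  | 0 =>
    by_cases hr5 : 5 ≤ r
    · have : (5:ℚ) ≤ (r:ℚ) := by exact_mod_cast hr5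
      rw [hE]
      push_cast
      nlinarith
    · have hr4 : r ≤ 4 := by omega
      interval_cases r
      · simp at hE; rw [hE] at hpos; norm_num at hpos
      · rw [hE] at hpos
        have := inv_pos_aux (m 0) (by have := hm 0; omega)
        rw [one_div] at this
        simp [Fin.sum_univ_one] at hpos
        linarith
      · rw [hE] at hpos
        have h0 := inv_pos_aux (m 0) (by have := hm 0; omega)
        have h1 := inv_pos_aux (m 1) (by have := hm 1; omega)
        rw [one_div] at h0 h1
        simp [Fin.sum_univ_two] at hpos
        linarith
      · rw [hE, Fin.sum_univ_three] at hpos hne ⊢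
        have := key3' (m 0) (m 1) (m 2) (hm 0) (hm 1) (hm 2)
          (by push_cast at hpos ⊢; linarith)
          (by intro h; apply hne; push_cast at h ⊢; linarith)
        push_cast at this ⊢
        linarith
      · -- r = 4
        by_cases H : ∀ i, m i = 2
        · rw [hE, Fin.sum_univ_four, H 0, H 1, H 2, H 3] at hpos
          norm_num at hpos
        · push_neg at H
          obtain ⟨i, hi⟩ := H
          have hi3 : 3 ≤ m i := by have := hm i; omega
          have hsum : (13:ℚ)/6 ≤ ∑ j : Fin 4, (1 - 1/(m j : ℚ)) := by
            have h1 : ∀ j ∈ Finset.univ,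
                (1/2 + if j = i then (1/6:ℚ) else 0) ≤ 1 - 1/(m j : ℚ) := by
              intro j _
              by_cases hj : j = i
              · subst hj
                simp only [if_pos rfl]
                have := inv_le_aux 3 (m j) (by norm_num) hi3
                norm_num at this ⊢
                linarith
              · simp only [if_neg hj]
                have := hterm j
                linarith
            have h2 : ∑ j : Fin 4, (1/2 + if j = i then (1/6:ℚ) else 0) = 13/6 := by
              rw [Finset.sum_add_distrib, Finset.sum_ite_eq' Finset.univ i]
              simp
              norm_num
            calc (13:ℚ)/6 = ∑ j : Fin 4, (1/2 + if j = i then (1/6:ℚ) else 0) := h2.symm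
              _ ≤ _ := Finset.sum_le_sum h1
          rw [hE]
          push_cast
          linarith

theorem hurwitz_bound_of_ne_one_div_42
    (σ n : ℕ) (hσ : 2 ≤ σ) (hn : 1 ≤ n)
    (ρ r : ℕ) (m : Fin r → ℕ) (hm : ∀ i, 2 ≤ m i)
    (E : ℚ) (hE : E = 2 * (ρ : ℚ) - 2 + ∑ i : Fin r, (1 - 1 / (m i : ℚ)))
    (hpos : 0 < E) (hne : E ≠ 1 / 42) (heq : (2 * (σ : ℚ) - 2) = (n : ℚ) * E) :
    n ≤ 48 * (σ - 1) := by
  have hE24 := E_lb ρ r m hm E hE hpos hne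
  have h1 : (n:ℚ) * (1/24) ≤ (n:ℚ) * E :=
    mul_le_mul_of_nonneg_left hE24 (by positivity)
  have h2 : (n:ℚ) + 48 ≤ 48 * (σ:ℚ) := by linarith
  have h3 : n + 48 ≤ 48 * σ := by exact_mod_cast h2
  omega
end
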